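/- For every word u and every substitution Θ: 𝔄 → 𝔄⁺ there exists a map ρ: 𝔄 → 𝔄 (a renaming of variables, applied letterwise to words) such that, setting E(u) := ρ(u): (i) con(E(u)) ⊆ con(u); (ii) Θ(E(u)) is of the same type as Θ(u); and (iii) for all x, y ∈ con(E(u)), if Θ(x) and Θ(y) are powers of the same variable then x = y. -/

import Mathlib

/-- The alphabet of variables. -/
abbrev Var := ℕ

/-- Words are (possibly empty) lists of variables; elements of the free
semigroup `𝔄⁺` are the nonempty ones. -/
abbrev Word := List Var

/-- Two words are of the same type if they agree after collapsing each
maximal constant run (island) to a single letter. -/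
def sameType (u v : Word) : Prop :=
  u.destutter (· ≠ ·) = v.destutter (· ≠ ·)

/-- The number of islands of a word. -/
def height (u : Word) : ℕ := (u.destutter (· ≠ ·)).length

/-- The set of variables occurring in a word. -/
def con (u : Word) : Set Var := {x | x ∈ u}

/-- `del u X` is the word obtained from `u` by deleting all occurrences of all
variables not in the list `X`; i.e. `u(x₁,…,x_k)` for `X = [x₁,…,x_k]`. -/
def del (u : Word) (X : List Var) : Word := u.filter (· ∈ X)

/-- The set of linear variables of `u` (occurring exactly once). -/
def lin (u : Word) : Set Var := {x | u.count x = 1}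

/-- The set of non-linear variables of `u` (occurring at least twice). -/
def nonlin (u : Word) : Set Var := {x | 2 ≤ u.count x}

/-- The set of variables occurring exactly twice in `u`. -/
def con2 (u : Word) : Set Var := {x | u.count x = 2}

/-- The set of variables occurring at least three times in `u`. -/
def conGt2 (u : Word) : Set Var := {x | 3 ≤ u.count x}

/-- Applying a substitution `Θ : 𝔄 → 𝔄⁺` to a word, as the extension of `Θ`
to a homomorphism. -/
def subst (Θ : Var → Word) (u : Word) : Word := u.flatMap Θ

/-- `w` is a power (with positive exponent) of the variable `c`. -/
def isPowerOf (w : Word) (c : Var) : Prop := ∃ k : ℕ, 0 < k ∧ w = List.replicate k c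

/-- A monoid `M` satisfies the identity `u ≈ v` if every monoid homomorphism
from the free monoid `𝔄*` to `M` (equivalently, the extension of every map
`φ : 𝔄 → M`) identifies `u` and `v`. -/
def MSat (M : Type) [Monoid M] (u v : Word) : Prop :=
  ∀ φ : Var → M, (u.map φ).prod = (v.map φ).prod

/-- Evaluation of a nonempty word in a semigroup under `φ : 𝔄 → S`
(the empty word evaluates to `none`). -/
def evalS {S : Type} [Semigroup S] (φ : Var → S) : Word → Option S
  | [] => none
  | a :: t => some ((t.map φ).foldl (· * ·) (φ a))

/-- A semigroup `S` satisfies the identity `u ≈ v` between nonempty words if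
every semigroup homomorphism from the free semigroup `𝔄⁺` to `S` identifies
`u` and `v`. -/
def SSat (S : Type) [Semigroup S] (u v : Word) : Prop :=
  ∀ φ : Var → S, evalS φ u = evalS φ v

/-- Property (C_ℓ) for a monoid: every word in two variables of height at most
`ℓ` can form an identity of `M` only with a word of the same type. -/
def MPropC (M : Type) [Monoid M] (ℓ : ℕ) : Prop :=
  ∀ x y : Var, x ≠ y → ∀ u : Word, u ≠ [] → (∀ c ∈ u, c = x ∨ c = y) →
    height u ≤ ℓ → ∀ v : Word, MSat M u v → sameType u v

/-- Property (C_ℓ) for a semigroup. -/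
def SPropC (S : Type) [Semigroup S] (ℓ : ℕ) : Prop :=
  ∀ x y : Var, x ≠ y → ∀ u : Word, u ≠ [] → (∀ c ∈ u, c = x ∨ c = y) →
    height u ≤ ℓ → ∀ v : Word, SSat S u v → sameType u v

/-- A monoid is finitely based if some finite set of identities it satisfies
entails all its identities (in every monoid). -/
def MonoidFB (M : Type) [Monoid M] : Prop :=
  ∃ Sig : Finset (Word × Word),
    (∀ p ∈ Sig, MSat M p.1 p.2) ∧
    ∀ (N : Type) [Monoid N], (∀ p ∈ Sig, MSat N p.1 p.2) →
      ∀ u v : Word, MSat M u v → MSat N u v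

/-- A semigroup is finitely based if some finite set of identities (between
nonempty words) it satisfies entails all its identities (in every semigroup). -/
def SemigroupFB (S : Type) [Semigroup S] : Prop :=
  ∃ Sig : Finset (Word × Word),
    (∀ p ∈ Sig, p.1 ≠ [] ∧ p.2 ≠ [] ∧ SSat S p.1 p.2) ∧
    ∀ (T : Type) [Semigroup T], (∀ p ∈ Sig, SSat T p.1 p.2) →
      ∀ u v : Word, u ≠ [] → v ≠ [] → SSat S u v → SSat T u v

/-- `B` is a block of `u` occurring as `u = p ++ B ++ s`: it contains no linear
variables of `u` and is maximal with this property. -/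
def IsBlockAt (u p B s : Word) : Prop :=
  u = p ++ B ++ s ∧ (∀ c ∈ B, c ∉ lin u) ∧
  (∀ c : Var, p.getLast? = some c → c ∈ lin u) ∧
  (∀ c : Var, s.head? = some c → c ∈ lin u)

/-- The word `Uₙ = (x₁⋯xₙ)(xₙ⋯x₁)(x₁⋯xₙ)`. -/
def Uword (n : ℕ) (x : Fin n → Var) : Word :=
  List.ofFn x ++ (List.ofFn x).reverse ++ List.ofFn x

/-- The word `Vₙ = (x₁⋯xₙ)(x₁²x₂²⋯xₙ²)`. -/
def Vword (n : ℕ) (x : Fin n → Var) : Word :=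
  List.ofFn x ++ (List.ofFn x).flatMap (fun c => [c, c])

/-- Fact 4.2: given a word `u` and a substitution `Θ`, one
can rename variables of `u` so that the renamed word `E(u) = ρ∘u` has
content inside `con(u)`, `Θ(E(u))` is of the same type as `Θ(u)`, and
distinct variables of `E(u)` are not sent by `Θ` to powers of the same
variable. -/
def fgl (a : Var) (l : Word) : Word := if l.head? = some a then l.tail else l

lemma destutter'_ne (a : Var) (l : Word) :
    l.destutter' (· ≠ ·) a = a :: fgl a (l.destutter (· ≠ ·)) := by
  induction l generalizing a with
  | nil => simp [fgl]
  | cons b t ih =>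
    rw [List.destutter'_cons, List.destutter_cons']
    by_cases h : a = b
    · subst h
      rw [if_neg (by simp), ih a]
      simp [fgl]
    · rw [if_pos h, ih b]
      simp [fgl, Ne.symm h]

def Gg (x y : Word) : Word :=
  x ++ (match x.getLast? with | none => y | some a => fgl a y)

lemma fgl_append (a : Var) {d : Word} (hd : d ≠ []) (z : Word) :
    fgl a (d ++ z) = fgl a d ++ z := by
  obtain ⟨c, t, rfl⟩ := List.exists_cons_of_ne_nil hd
  by_cases h : c = a <;> simp [fgl, h]

lemma getLast?_cons_fgl (a : Var) {d : Word} (hd : d ≠ []) :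
    (a :: fgl a d).getLast? = d.getLast? := by
  obtain ⟨c, t, rfl⟩ := List.exists_cons_of_ne_nil hd
  by_cases h : c = a
  · subst h; simp [fgl]
  · simp [fgl, h, List.getLast?_cons_cons]

lemma destutter_append (u v : Word) :
    (u ++ v).destutter (· ≠ ·) = Gg (u.destutter (· ≠ ·)) (v.destutter (· ≠ ·)) := by
  induction u with
  | nil => simp [Gg]
  | cons a u' ih =>
    rw [List.cons_append, List.destutter_cons', destutter'_ne, ih,
      List.destutter_cons', destutter'_ne]
    set d' := u'.destutter (· ≠ ·) with hd'
    set dv := v.destutter (· ≠ ·) with hdv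
    by_cases hd : d' = []
    · rw [hd]
      simp [Gg, fgl]
      exact if_congr Iff.rfl rfl rfl
    · obtain ⟨L, hL⟩ := List.getLast?_isSome.mpr hd |> Option.isSome_iff_exists.mp
      have h1 : Gg d' dv = d' ++ fgl L dv := by rw [Gg, hL]
      have h2 : Gg (a :: fgl a d') dv = (a :: fgl a d') ++ fgl L dv := by
        rw [Gg, show (a :: fgl a d').getLast? = some L from (getLast?_cons_fgl a hd).trans hL]
      rw [h1, h2, fgl_append a hd]
      simp

lemma sameType_append {a b a' b' : Word} (h1 : sameType a a') (h2 : sameType b b') :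
    sameType (a ++ b) (a' ++ b') := by
  unfold sameType at *
  rw [destutter_append, destutter_append, h1, h2]

lemma sameType_flatMap (l : List Var) (θ θ' : Var → Word)
    (h : ∀ x ∈ l, sameType (θ x) (θ' x)) :
    sameType (l.flatMap θ) (l.flatMap θ') := by
  induction l with
  | nil => rfl
  | cons a t ih =>
    rw [List.flatMap_cons, List.flatMap_cons]
    exact sameType_append (h a (by simp)) (ih fun x hx => h x (List.mem_cons_of_mem _ hx))

lemma destutter_replicate (k : ℕ) (hk : 0 < k) (c : Var) :
    (List.replicate k c).destutter (· ≠ ·) = [c] := by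
  induction k with
  | zero => omega
  | succ n ih =>
    rcases Nat.eq_zero_or_pos n with hn | hn
    · subst hn; simp
    · rw [List.replicate_succ, List.destutter_cons', destutter'_ne, ih hn]
      simp [fgl]

theorem stmt16 (u : Word) (Θ : Var → Word) (hΘne : ∀ c : Var, Θ c ≠ []) :
    ∃ ρ : Var → Var,
      con (u.map ρ) ⊆ con u ∧
      sameType (subst Θ (u.map ρ)) (subst Θ u) ∧
      ∀ x y : Var, x ∈ con (u.map ρ) → y ∈ con (u.map ρ) →
        ∀ c : Var, isPowerOf (Θ x) c → isPowerOf (Θ y) c → x = y := by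

  classical
  set P : Var → Prop := fun x => Θ x = List.replicate (Θ x).length (Θ x).headI with hPdef
  set F : Var → Word := fun d => u.filter (fun y => decide (P y ∧ (Θ y).headI = d)) with hFdef
  set r : Var → Var := fun d => (F d).headI with hrdef
  set ρ : Var → Var := fun x => if x ∈ u ∧ P x then r ((Θ x).headI) else x with hρdef
  have hpow : ∀ x c, isPowerOf (Θ x) c ↔ (P x ∧ (Θ x).headI = c) := by
    intro x c
    constructor
    · rintro ⟨k, hk, hke⟩
      have hlen : (Θ x).length = k := by rw [hke]; simp
      have hhead : (Θ x).headI = c := by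
        rw [hke]
        cases k with
        | zero => omega
        | succ n => simp [List.replicate_succ]
      exact ⟨by rw [hPdef]; simp only; rw [hlen, hhead, hke], hhead⟩
    · rintro ⟨hp, hh⟩
      exact ⟨(Θ x).length, by
        have := hΘne x
        exact List.length_pos_iff.mpr this, by rw [← hh]; exact hp⟩
  have hmemF : ∀ d y, y ∈ F d ↔ (y ∈ u ∧ P y ∧ (Θ y).headI = d) := by
    intro d y
    rw [hFdef]
    simp [List.mem_filter]
  have hrmem : ∀ x, x ∈ u → P x →
      r ((Θ x).headI) ∈ u ∧ P (r ((Θ x).headI)) ∧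
        (Θ (r ((Θ x).headI))).headI = (Θ x).headI := by
    intro x hx hp
    have hne : F ((Θ x).headI) ≠ [] :=
      List.ne_nil_of_mem ((hmemF _ x).mpr ⟨hx, hp, rfl⟩)
    have : r ((Θ x).headI) ∈ F ((Θ x).headI) := by
      rw [hrdef]; exact List.head!_mem_self hne
    exact (hmemF _ _).mp this
  have hρmem : ∀ x, x ∈ u → ρ x ∈ u := by
    intro x hx
    by_cases h : x ∈ u ∧ P x
    · have : ρ x = r ((Θ x).headI) := by rw [hρdef]; simp only; rw [if_pos h]
      rw [this]; exact (hrmem x hx h.2).1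
    · have : ρ x = x := by rw [hρdef]; simp only; rw [if_neg h]
      rw [this]; exact hx
  refine ⟨ρ, ?_, ?_, ?_⟩
  · intro z hz
    obtain ⟨x, hx, rfl⟩ := List.mem_map.mp hz
    exact hρmem x hx
  · show sameType ((u.map ρ).flatMap Θ) (u.flatMap Θ)
    rw [List.flatMap_map]
    apply sameType_flatMap
    intro x hx
    by_cases h : x ∈ u ∧ P x
    · have hrx := hrmem x hx h.2
      have h1 : Θ (ρ x) = Θ (r ((Θ x).headI)) := by rw [hρdef]; simp only; rw [if_pos h]
      have h2 : isPowerOf (Θ (r ((Θ x).headI))) ((Θ x).headI) :=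
        (hpow _ _).mpr ⟨hrx.2.1, hrx.2.2⟩
      have h3 : isPowerOf (Θ x) ((Θ x).headI) := (hpow _ _).mpr ⟨h.2, rfl⟩
      obtain ⟨k, hk, hke⟩ := h2
      obtain ⟨m, hm, hme⟩ := h3
      show sameType (Θ (ρ x)) (Θ x)
      set d := (Θ x).headI with hd
      rw [sameType, h1, hke, hme, destutter_replicate k hk, destutter_replicate m hm]
    · have : ρ x = x := by rw [hρdef]; simp only; rw [if_neg h]
      rw [this]
      exact rfl
  · intro x y hx hy c hcx hcy
    obtain ⟨x₀, hx₀, hxe⟩ := List.mem_map.mp hx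
    obtain ⟨y₀, hy₀, hye⟩ := List.mem_map.mp hy
    have key : ∀ z₀, z₀ ∈ u → ∀ z, ρ z₀ = z → isPowerOf (Θ z) c → z = r c := by
      intro z₀ hz₀ z hze hzc
      by_cases h : z₀ ∈ u ∧ P z₀
      · have hρz : z = r ((Θ z₀).headI) := by
          rw [← hze, hρdef]; simp only; rw [if_pos h]
        have hrz := hrmem z₀ hz₀ h.2
        have := (hpow z c).mp hzc
        rw [hρz] at this ⊢
        rw [← this.2, hrz.2.2]
      · have hρz : z = z₀ := by rw [← hze, hρdef]; simp only; rw [if_neg h]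
        subst hρz
        exact absurd ⟨hz₀, ((hpow z c).mp hzc).1⟩ h
    rw [key x₀ hx₀ x hxe hcx, key y₀ hy₀ y hye hcy]
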